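/- Let w be the infinite binary word w = 0 · 1^{3^0} 0^{3^0} 1^{3^1} 0^{3^1} 1^{3^2} 0^{3^2} ⋯, i.e., w = 0 ∏_{i≥0} 1^{3^i} 0^{3^i}. Then for every n ≥ 0, the abelian complexity of w satisfies ρ^ab_w(n) = n + 1, the maximal possible value of the abelian complexity of a binary word. -/

import Mathlib

/-- The factor of the infinite word `ω` of length `n` starting at position `i`. -/
def factor {A : Type*} (ω : ℕ → A) (i n : ℕ) : List A :=
  (List.range n).map fun j => ω (i + j)

/-- The abelian complexity of `ω`: the number of abelian equivalence classes of
factors of `ω` of length `n`. -/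
noncomputable def abelianComplexity {A : Type*} [DecidableEq A] (ω : ℕ → A) (n : ℕ) : ℕ :=
  Set.ncard {c : A → ℕ | ∃ i : ℕ, c = fun a => (factor ω i n).count a}

/-- The finite prefixes of the word `0 ∏_{i ≥ 0} 1^{3^i} 0^{3^i}`:
`pref 0 = 0` and `pref (i+1) = pref i · 1^{3^i} · 0^{3^i}`. -/
def pref : ℕ → List (Fin 2)
  | 0 => [0]
  | i + 1 => pref i ++ List.replicate (3 ^ i) 1 ++ List.replicate (3 ^ i) 0

lemma factor_length {A : Type*} (ω : ℕ → A) (i n : ℕ) : (factor ω i n).length = n := by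
  simp [factor]

lemma factor_getElem {A : Type*} (ω : ℕ → A) (i n j : ℕ) (hj : j < n) :
    (factor ω i n)[j]'(by simpa [factor] using hj) = ω (i + j) := by
  simp [factor]

lemma factor_add {A : Type*} (ω : ℕ → A) (i m n : ℕ) :
    factor ω i (m + n) = factor ω i m ++ factor ω (i + m) n := by
  simp [factor, List.range_add, Function.comp, add_assoc]

lemma count_fin2 (l : List (Fin 2)) : l.count 0 + l.count 1 = l.length := by
  induction l with
  | nil => simp
  | cons a l ih =>
    fin_cases a <;> simp [List.count_cons] <;> omega

lemma pref_length (i : ℕ) : (pref i).length = 3 ^ i := by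
  induction i with
  | zero => rfl
  | succ i ih => simp [pref, ih, pow_succ]; ring

lemma blocks (w : ℕ → Fin 2)
    (hw : ∀ i : ℕ, factor w 0 (pref i).length = pref i) (i : ℕ) :
    factor w (3 ^ i) (3 ^ i) = List.replicate (3 ^ i) (1 : Fin 2) ∧
      factor w (2 * 3 ^ i) (3 ^ i) = List.replicate (3 ^ i) (0 : Fin 2) := by
  have h := hw (i + 1)
  rw [pref_length] at h
  have h3 : (3 : ℕ) ^ (i + 1) = 3 ^ i + (3 ^ i + 3 ^ i) := by ring
  rw [h3, factor_add, factor_add] at h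
  have hp : pref (i + 1)
      = pref i ++ (List.replicate (3 ^ i) (1 : Fin 2) ++ List.replicate (3 ^ i) (0 : Fin 2)) := by
    simp [pref]
  rw [hp] at h
  have h1 := List.append_inj_right h (by simp [factor_length, pref_length])
  have h2 := List.append_inj h1 (by simp [factor_length])
  refine ⟨?_, ?_⟩
  · simpa using h2.1
  · have := h2.2
    have e : 0 + 3 ^ i + 3 ^ i = 2 * 3 ^ i := by ring
    rwa [e] at this

lemma w_one (w : ℕ → Fin 2)
    (hw : ∀ i : ℕ, factor w 0 (pref i).length = pref i) (i m : ℕ) (hm : m < 3 ^ i) :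
    w (3 ^ i + m) = 1 := by
  have h := (blocks w hw i).1
  have := factor_getElem w (3 ^ i) (3 ^ i) m hm
  rw [← this]
  simp [h]

lemma w_zero (w : ℕ → Fin 2)
    (hw : ∀ i : ℕ, factor w 0 (pref i).length = pref i) (i m : ℕ) (hm : m < 3 ^ i) :
    w (2 * 3 ^ i + m) = 0 := by
  have h := (blocks w hw i).2
  have := factor_getElem w (2 * 3 ^ i) (3 ^ i) m hm
  rw [← this]
  simp [h]

lemma exists_count (w : ℕ → Fin 2)
    (hw : ∀ i : ℕ, factor w 0 (pref i).length = pref i) (n k : ℕ) (hk : k ≤ n) :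
    ∃ s, (factor w s n).count 1 = k ∧ (factor w s n).count 0 = n - k := by
  have hn : n ≤ 3 ^ n := Nat.le_of_lt (Nat.lt_pow_self (n := n) (by norm_num))
  set t := 3 ^ n with ht
  refine ⟨2 * t - k, ?_⟩
  have hfac : factor w (2 * t - k) n
      = List.replicate k (1 : Fin 2) ++ List.replicate (n - k) (0 : Fin 2) := by
    apply List.ext_getElem
    · simp [factor_length]; omega
    · intro j h1 h2
      have hjn : j < n := by simpa [factor_length] using h1
      rw [factor_getElem w _ _ _ hjn]
      by_cases hj : j < k
      · rw [List.getElem_append_left (by simpa using hj)]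
        have e : 2 * t - k + j = t + (t - k + j) := by omega
        rw [e, w_one w hw n (t - k + j) (by omega)]
        simp
      · rw [List.getElem_append_right (by simpa using hj)]
        have e : 2 * t - k + j = 2 * t + (j - k) := by omega
        rw [e, w_zero w hw n (j - k) (by omega)]
        simp
  rw [hfac]
  constructor <;> simp [List.count_append, List.count_replicate]

theorem abelianComplexity_of_prodWord (w : ℕ → Fin 2)
    (hw : ∀ i : ℕ, factor w 0 (pref i).length = pref i) :
    ∀ n : ℕ, abelianComplexity w n = n + 1 := by
  intro n
  classical
  set f : ℕ → (Fin 2 → ℕ) := fun m a => if a = 1 then m else n - m with hf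
  have hinj : Function.Injective f := by
    intro a b h
    simpa [hf] using congrFun h 1
  have hset : {c : Fin 2 → ℕ | ∃ i, c = fun a => (factor w i n).count a}
      = f '' Set.Iic n := by
    ext c
    constructor
    · rintro ⟨i, rfl⟩
      have hsum := count_fin2 (factor w i n)
      rw [factor_length] at hsum
      refine ⟨(factor w i n).count 1, by simp; omega, ?_⟩
      funext a
      fin_cases a
      · simp [hf]; omega
      · simp [hf]
    · rintro ⟨m, hm, rfl⟩
      obtain ⟨s, h1, h0⟩ := exists_count w hw n m (by simpa using hm)
      refine ⟨s, ?_⟩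
      funext a
      fin_cases a
      · simp [hf, h0]
      · simp [hf, h1]
  rw [abelianComplexity, hset, Set.ncard_image_of_injective _ hinj,
    ← Finset.coe_Iic, Set.ncard_coe_finset, Nat.card_Iic]
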